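/- Fix any action i ∈ {1,…,N}. For any deterministic losses ℓ_{j,t} ∈ [0,1] and any realization of the perturbation steps X_{j,t} ∈ {−1/2, +1/2}, if for every t ≥ 1 the action I_t minimizes L_{j,t−1} + Z_{j,t} over j (where Z_{j,t} = Σ_{s=1}^t X_{j,s}, L_{j,t} = Σ_{s=1}^t ℓ_{j,s}, L_{j,0} = 0), then Σ_{t=1}^n ℓ_{I_t,t} − L_{i,n} ≤ 2·|{2 ≤ t ≤ n+1 : I_{t−1} ≠ I_t}| + Z_{i,n+1} − Σ_{t=1}^{n+1} X_{I_{t−1},t}, where in the last sum for t = 1 one sets I_0 = I_1. -/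
import Mathlib


/-- Deterministic "be-the-leader"-style lemma: for any losses in `[0,1]`,
any ±1/2 perturbation steps, and any selector `I` that follows the perturbed
leader, the regret against action `i` is bounded by twice the number of
switches plus `Z_{i,n+1} - ∑_{t=1}^{n+1} X_{I_{t-1},t}` (with `I 0 = I 1`). -/
theorem fpl_regret_le_switches_deterministic
    (N n : ℕ) (hN : 1 ≤ N)
    (ℓ : Fin N → ℕ → ℝ) (hℓ : ∀ j t, ℓ j t ∈ Set.Icc (0:ℝ) 1)
    (X : Fin N → ℕ → ℝ) (hX : ∀ j t, X j t = 1/2 ∨ X j t = -(1/2))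
    (Z : Fin N → ℕ → ℝ) (hZ : ∀ j t, Z j t = ∑ s ∈ Finset.Icc 1 t, X j s)
    (L : Fin N → ℕ → ℝ) (hL : ∀ j t, L j t = ∑ s ∈ Finset.Icc 1 t, ℓ j s)
    (I : ℕ → Fin N) (hI0 : I 0 = I 1)
    (hI : ∀ t, 1 ≤ t → ∀ j, L (I t) (t-1) + Z (I t) t ≤ L j (t-1) + Z j t)
    (i : Fin N) :
    (∑ t ∈ Finset.Icc 1 n, ℓ (I t) t) - L i n
      ≤ 2 * (((Finset.Icc 2 (n+1)).filter (fun t => I (t-1) ≠ I t)).card : ℝ)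
        + Z i (n+1) - ∑ t ∈ Finset.Icc 1 (n+1), X (I (t-1)) t := by
  set g : ℕ → Fin N → ℝ := fun t j => (if t = 1 then 0 else ℓ j (t-1)) + X j t with hg
  -- telescoping identity
  have tel : ∀ (j : Fin N) (T : ℕ),
      L j T + Z j (T+1) = (L j (T-1) + Z j T) + g (T+1) j := by
    intro j T
    cases T with
    | zero =>
        simp [hg, hL, hZ]
    | succ S =>
        have h1 : L j (S+1) = L j S + ℓ j (S+1) := by
          rw [hL j (S+1), hL j S, Finset.sum_Icc_succ_top (by omega : 1 ≤ S+1)]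
        have h2 : Z j (S+2) = Z j (S+1) + X j (S+2) := by
          rw [hZ j (S+2), hZ j (S+1), Finset.sum_Icc_succ_top (by omega : 1 ≤ S+2)]
        simp only [hg, Nat.add_sub_cancel, h1, h2]
        norm_num
        ring
  -- be the leader
  have BTL : ∀ (T : ℕ) (j : Fin N),
      (∑ t ∈ Finset.Icc 1 T, g t (I t)) ≤ L j (T-1) + Z j T := by
    intro T
    induction T with
    | zero => intro j; simp [hL, hZ]
    | succ S ih =>
        intro j
        rw [Finset.sum_Icc_succ_top (by omega : 1 ≤ S+1)]
        have h1 := ih (I (S+1))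
        have h2 := hI (S+1) (by omega) j
        have h3 := tel (I (S+1)) S
        simp only [Nat.add_sub_cancel] at h2 ⊢
        linarith
  have key := BTL (n+1) i
  simp only [Nat.add_sub_cancel] at key
  set c : ℕ → ℝ := fun t => if I (t-1) = I t then 0 else 2 with hc
  set h : ℕ → ℝ := fun t => (if t = 1 then 0 else ℓ (I (t-1)) (t-1)) + X (I (t-1)) t with hh
  -- pointwise switching bound
  have step1 : ∑ t ∈ Finset.Icc 1 (n+1), h t
      ≤ (∑ t ∈ Finset.Icc 1 (n+1), g t (I t)) + ∑ t ∈ Finset.Icc 1 (n+1), c t := by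
    rw [← Finset.sum_add_distrib]
    apply Finset.sum_le_sum
    intro t _
    by_cases heq : I (t-1) = I t
    · simp only [hh, hg, hc, heq, if_pos]
      simp
    · simp only [hh, hg, hc, if_neg heq]
      have hx1 := hX (I (t-1)) t
      have hx2 := hX (I t) t
      have hl1 := hℓ (I (t-1)) (t-1)
      have hl2 := hℓ (I t) (t-1)
      simp only [Set.mem_Icc] at hl1 hl2
      split_ifs
      · rcases hx1 with h1 | h1 <;> rcases hx2 with h2 | h2 <;> rw [h1, h2] <;> norm_num
      · rcases hx1 with h1 | h1 <;> rcases hx2 with h2 | h2 <;> rw [h1, h2] <;> nlinarith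
  -- splitting off t = 1
  have hins : Finset.Icc 1 (n+1) = insert 1 (Finset.Icc 2 (n+1)) := by
    ext t
    simp only [Finset.mem_Icc, Finset.mem_insert]
    omega
  have hnotmem : (1 : ℕ) ∉ Finset.Icc 2 (n+1) := by simp
  -- switch-count identity
  have step2 : ∑ t ∈ Finset.Icc 1 (n+1), c t
      = 2 * (((Finset.Icc 2 (n+1)).filter (fun t => I (t-1) ≠ I t)).card : ℝ) := by
    rw [hins, Finset.sum_insert hnotmem]
    have hc1 : c 1 = 0 := by simp [hc, hI0]
    have : ∑ t ∈ Finset.Icc 2 (n+1), c t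
        = ∑ t ∈ (Finset.Icc 2 (n+1)).filter (fun t => I (t-1) ≠ I t), (2:ℝ) := by
      rw [Finset.sum_filter]
      apply Finset.sum_congr rfl
      intro t _
      by_cases heq : I (t-1) = I t <;> simp [hc, heq]
    rw [hc1, this, Finset.sum_const, nsmul_eq_mul]
    ring
  -- reindexing
  have shift : ∀ (f : ℕ → ℝ) (m : ℕ),
      ∑ t ∈ Finset.Icc 2 (m+1), f (t-1) = ∑ t ∈ Finset.Icc 1 m, f t := by
    intro f m
    induction m with
    | zero => simp
    | succ k ih =>
        rw [Finset.sum_Icc_succ_top (by omega : 2 ≤ k+1+1),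
          Finset.sum_Icc_succ_top (by omega : 1 ≤ k+1), ih]
        norm_num
  have step3 : ∑ t ∈ Finset.Icc 1 (n+1), h t
      = (∑ t ∈ Finset.Icc 1 n, ℓ (I t) t)
        + ∑ t ∈ Finset.Icc 1 (n+1), X (I (t-1)) t := by
    simp only [hh]
    rw [Finset.sum_add_distrib]
    congr 1
    rw [hins, Finset.sum_insert hnotmem, if_pos rfl, zero_add]
    have := shift (fun t => ℓ (I t) t) n
    rw [← this]
    apply Finset.sum_congr rfl
    intro t ht
    simp only [Finset.mem_Icc] at ht
    rw [if_neg (by omega)]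
  linarith
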